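/- Let M be an indecomposable right R-module. Then M is principally δ-lifting if and only if M is principally δ-hollow, i.e., every proper cyclic submodule of M is δ-small in M. -/

import Mathlib

/-- A submodule `K` of `M` is *essential* in `M` if it has nonzero intersection with
every nonzero submodule of `M`. -/
def IsEssentialSubmodule {R M : Type*} [Ring R] [AddCommGroup M] [Module R M]
    (K : Submodule R M) : Prop :=
  ∀ N : Submodule R M, N ≠ ⊥ → K ⊓ N ≠ ⊥

/-- A module `M` is *singular* if the annihilator of every element of `M` is an
essential ideal of `R`. -/
def IsSingularModule (R M : Type*) [Ring R] [AddCommGroup M] [Module R M] : Prop :=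
  ∀ x : M, IsEssentialSubmodule (LinearMap.ker (LinearMap.toSpanSingleton R M x))

/-- A submodule `N` of `M` is *δ-small* in `M` if whenever `M = N + X` with `M/X`
singular, we have `X = M`. -/
def IsDeltaSmall (R : Type*) {M : Type*} [Ring R] [AddCommGroup M] [Module R M]
    (N : Submodule R M) : Prop :=
  ∀ X : Submodule R M, N ⊔ X = ⊤ → IsSingularModule R (M ⧸ X) → X = ⊤

/-- A module `M` is *principally δ-lifting* if for each `m ∈ M` there is a
decomposition `M = A ⊕ B` with `A ≤ mR` and `mR ∩ B` δ-small in `B`. -/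
def IsPrinDeltaLifting (R M : Type*) [Ring R] [AddCommGroup M] [Module R M] : Prop :=
  ∀ m : M, ∃ A B : Submodule R M, A ≤ Submodule.span R {m} ∧ IsCompl A B ∧
    IsDeltaSmall R ((Submodule.span R {m} ⊓ B).comap B.subtype)

/-- A module `M` is *principally δ-hollow* if every proper cyclic submodule of `M`
is δ-small in `M`. -/
def IsPrinDeltaHollow (R M : Type*) [Ring R] [AddCommGroup M] [Module R M] : Prop :=
  ∀ m : M, Submodule.span R {m} ≠ ⊤ → IsDeltaSmall R (Submodule.span R {m})

lemma singular_congr {R Q Q' : Type*} [Ring R] [AddCommGroup Q] [Module R Q]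
    [AddCommGroup Q'] [Module R Q'] (f : Q ≃ₗ[R] Q') (h : IsSingularModule R Q) :
    IsSingularModule R Q' := by
  intro x
  have hk : LinearMap.ker (LinearMap.toSpanSingleton R Q' x)
      = LinearMap.ker (LinearMap.toSpanSingleton R Q (f.symm x)) := by
    ext r
    simp only [LinearMap.mem_ker, LinearMap.toSpanSingleton_apply, ← map_smul,
      f.symm.map_eq_zero_iff]
  rw [hk]; exact h _

lemma deltaSmall_map {R M M' : Type*} [Ring R] [AddCommGroup M] [Module R M]
    [AddCommGroup M'] [Module R M'] (e : M' ≃ₗ[R] M) (N : Submodule R M')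
    (h : IsDeltaSmall R N) : IsDeltaSmall R (N.map (e : M' →ₗ[R] M)) := by
  intro X hX hsing
  set X' := X.comap (e : M' →ₗ[R] M) with hX'
  have hmap : X'.map (e : M' →ₗ[R] M) = X := by
    ext x
    simp [hX', Submodule.mem_map, Submodule.mem_comap]
  have hsup : N ⊔ X' = ⊤ := by
    apply Submodule.map_injective_of_injective e.injective
    rw [Submodule.map_sup, hmap]
    simpa using hX
  have hsing' : IsSingularModule R (M' ⧸ X') :=
    singular_congr (Submodule.Quotient.equiv X' X e hmap).symm hsing
  have := h X' hsup hsing'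
  rw [← hmap, this]
  ext x
  simp

theorem indecomposable_isPrinDeltaLifting_iff_hollow
    {R M : Type*} [Ring R] [AddCommGroup M] [Module R M] [Nontrivial M]
    (hind : ∀ A B : Submodule R M, IsCompl A B → A = ⊥ ∨ A = ⊤) :
    IsPrinDeltaLifting R M ↔ IsPrinDeltaHollow R M := by
  constructor
  · intro hl m hm
    obtain ⟨A, B, hA, hc, hsmall⟩ := hl m
    rcases hind A B hc with rfl | rfl
    · have hB : B = ⊤ := by simpa using hc.sup_eq_top
      subst hB
      have h2 := deltaSmall_map (Submodule.topEquiv (R := R) (M := M)) _ hsmall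
      have heq : ((Submodule.span R {m} ⊓ ⊤).comap
          (⊤ : Submodule R M).subtype).map ((Submodule.topEquiv (R := R) (M := M) : (⊤ : Submodule R M) →ₗ[R] M))
          = Submodule.span R {m} := by
        ext x
        simp [Submodule.mem_map, Submodule.mem_comap]
      rwa [heq] at h2
    · exact absurd (top_le_iff.mp hA) hm
  · intro hh m
    by_cases hm : Submodule.span R {m} = ⊤
    · refine ⟨⊤, ⊥, le_of_eq hm.symm, isCompl_top_bot, fun X _ _ => ?_⟩
      exact Submodule.eq_top_iff'.mpr (fun x => by rw [Subsingleton.elim x 0]; exact X.zero_mem)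
    · refine ⟨⊥, ⊤, bot_le, isCompl_bot_top, ?_⟩
      have h2 := deltaSmall_map (Submodule.topEquiv (R := R) (M := M)).symm _ (hh m hm)
      have heq : (Submodule.span R {m}).map ((Submodule.topEquiv (R := R) (M := M)).symm : M →ₗ[R] (⊤ : Submodule R M))
          = (Submodule.span R {m} ⊓ ⊤).comap (⊤ : Submodule R M).subtype := by
        ext x
        simp [Submodule.mem_map, Submodule.mem_comap, Subtype.ext_iff]
      rwa [heq] at h2
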